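/- Fix real θ > 0, α > −1, an integer n ≥ 1 and x_1,…,x_n > 0. Then the scaled n-point correlation function of the N-point biorthogonal Jacobi ensemble converges: lim_{N→∞} N^{−n(1+1/θ)} · ∏_{i=1}^n (x_i N^{−(1+1/θ)})^α · det[K_N^{Jac}(x_i N^{−(1+1/θ)}, x_j N^{−(1+1/θ)})]_{i,j=1}^n = ∏_{i=1}^n x_i^α · det[𝒦^{(α,θ)}(x_i,x_j)]_{i,j=1}^n. -/

import Mathlib

/-- The Christoffel–Darboux kernel of the `N`-point biorthogonal Jacobi ensemble
(zero-based summation indices). -/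
noncomputable def KJac (α θ : ℝ) (N : ℕ) (x y : ℝ) : ℝ :=
  θ * ∑ k ∈ Finset.range N, ∑ l ∈ Finset.range N,
    ((ascPochhammer ℝ N).eval (((k : ℝ) + 1 + α) / θ) * x ^ k /
        ((Nat.factorial k : ℝ) * (Nat.factorial (N - 1 - k) : ℝ))) *
      ((ascPochhammer ℝ N).eval (θ * (l : ℝ) + α + 1) * y ^ (θ * (l : ℝ)) /
        ((Nat.factorial l : ℝ) * (Nat.factorial (N - 1 - l) : ℝ))) *
      ((-1) ^ (k + l) / ((k : ℝ) + 1 + θ * (l : ℝ) + α))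

/-- The limit kernel `𝒦^{(α,θ)}(x,y)` of the biorthogonal Jacobi/Laguerre ensembles. -/
noncomputable def limitKernel (α θ x y : ℝ) : ℝ :=
  ∑' k : ℕ, ∑' l : ℕ,
    ((-1) ^ k * x ^ k / ((Nat.factorial k : ℝ) * Real.Gamma ((α + 1 + k) / θ))) *
      ((-1) ^ l * y ^ (θ * (l : ℝ)) /
        ((Nat.factorial l : ℝ) * Real.Gamma (α + 1 + θ * l))) *
      (θ / (α + 1 + k + θ * l))


open Real Filter Topology

-- Lemma 1: Gamma / ascPochhammer
lemma gamma_asc (a : ℝ) (ha : 0 < a) (N : ℕ) :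
    Real.Gamma (a + N) = Real.Gamma a * (ascPochhammer ℝ N).eval a := by
  induction N with
  | zero => simp
  | succ n ih =>
    have h : a + (n+1 : ℕ) = (a + n) + 1 := by push_cast; ring
    rw [h, Real.Gamma_add_one (by positivity), ascPochhammer_succ_right]
    simp only [Polynomial.eval_mul, Polynomial.eval_add, Polynomial.eval_X,
      Polynomial.eval_natCast]
    rw [ih]; ring

-- Lemma 2: fractional step bound via log-convexity
lemma gamma_frac_le {x f : ℝ} (hx : 0 < x) (hf0 : 0 ≤ f) (hf1 : f ≤ 1) :
    Real.Gamma (x + f) ≤ Real.Gamma x * x ^ f := by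
  have h := Real.convexOn_log_Gamma.2 (Set.mem_Ioi.mpr hx)
    (Set.mem_Ioi.mpr (by linarith : (0:ℝ) < x + 1)) (by linarith : (0:ℝ) ≤ 1 - f) hf0
    (by ring)
  simp only [smul_eq_mul, Function.comp_apply] at h
  have hxf : (1 - f) * x + f * (x + 1) = x + f := by ring
  rw [hxf] at h
  have hΓx : 0 < Real.Gamma x := Real.Gamma_pos_of_pos hx
  have hΓxf : 0 < Real.Gamma (x + f) := Real.Gamma_pos_of_pos (by linarith)
  have h2 : Real.log (Real.Gamma (x + f)) ≤ Real.log (Real.Gamma x) + f * Real.log x := by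
    rw [Real.Gamma_add_one hx.ne'] at h
    rw [Real.log_mul hx.ne' hΓx.ne'] at h
    nlinarith [h]
  calc Real.Gamma (x + f) = Real.exp (Real.log (Real.Gamma (x + f))) := (Real.exp_log hΓxf).symm
    _ ≤ Real.exp (Real.log (Real.Gamma x) + f * Real.log x) := Real.exp_le_exp.mpr h2
    _ = Real.Gamma x * x ^ f := by
        rw [Real.exp_add, Real.exp_log hΓx, Real.rpow_def_of_pos hx, mul_comm f (Real.log x)]

-- induction on integer part
lemma gamma_step_le (m : ℕ) : ∀ x f : ℝ, 0 < x → 0 ≤ f → f ≤ 1 →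
    Real.Gamma (x + f + m) ≤ Real.Gamma x * (x + f + m) ^ (f + m) := by
  induction m with
  | zero =>
    intro x f hx hf0 hf1
    simp only [Nat.cast_zero, add_zero]
    calc Real.Gamma (x + f) ≤ Real.Gamma x * x ^ f := gamma_frac_le hx hf0 hf1
      _ ≤ Real.Gamma x * (x + f) ^ f :=
        mul_le_mul_of_nonneg_left (Real.rpow_le_rpow hx.le (by linarith) hf0)
          (Real.Gamma_pos_of_pos hx).le
  | succ m ih =>
    intro x f hx hf0 hf1
    have hx1 : (0:ℝ) < x + 1 := by linarith
    have h1 : x + f + (m+1 : ℕ) = (x + 1) + f + m := by push_cast; ring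
    have h2 := ih (x + 1) f hx1 hf0 hf1
    rw [h1]
    have hΓ : Real.Gamma (x + 1) = x * Real.Gamma x := Real.Gamma_add_one hx.ne'
    rw [hΓ] at h2
    have hbase : (0:ℝ) < x + 1 + f + m := by positivity
    have hm0 : (0:ℝ) ≤ (m:ℝ) := Nat.cast_nonneg m
    have hxle : x ≤ x + 1 + f + m := by linarith
    have hpow : (0:ℝ) ≤ (x + 1 + f + m) ^ (f + m) := (Real.rpow_pos_of_pos hbase _).le
    have hsplit : (x + 1 + f + m : ℝ) ^ (f + ((m:ℝ) + 1)) =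
        (x + 1 + f + m) ^ (f + m) * (x + 1 + f + m) := by
      rw [← Real.rpow_add_one hbase.ne' (f + m)]; ring_nf
    calc Real.Gamma (x + 1 + f + m) ≤ x * Real.Gamma x * (x + 1 + f + m) ^ (f + m) := h2
      _ = Real.Gamma x * (x + 1 + f + m) ^ (f + m) * x := by ring
      _ ≤ Real.Gamma x * (x + 1 + f + m) ^ (f + m) * (x + 1 + f + m) :=
          mul_le_mul_of_nonneg_left hxle
            (mul_nonneg (Real.Gamma_pos_of_pos hx).le hpow)
      _ = Real.Gamma x * (x + 1 + f + m) ^ (f + (m+1:ℕ)) := by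
          push_cast
          rw [hsplit]; ring

lemma gamma_add_le {x s : ℝ} (hx : 0 < x) (hs : 0 ≤ s) :
    Real.Gamma (x + s) ≤ Real.Gamma x * (x + s) ^ s := by
  have hm : (⌊s⌋₊ : ℝ) ≤ s := Nat.floor_le hs
  have hf0 : 0 ≤ s - ⌊s⌋₊ := by linarith
  have hf1 : s - ⌊s⌋₊ ≤ 1 := by
    have := Nat.lt_floor_add_one s; linarith
  have key := gamma_step_le ⌊s⌋₊ x (s - ⌊s⌋₊) hx hf0 hf1
  have h1 : x + (s - ⌊s⌋₊) + ⌊s⌋₊ = x + s := by ring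
  have h2 : (s - ⌊s⌋₊) + ⌊s⌋₊ = s := by ring
  rwa [h1, h2] at key

lemma asc_eval_prod (a : ℝ) (N : ℕ) :
    (ascPochhammer ℝ N).eval a = ∏ j ∈ Finset.range N, (a + j) := by
  induction N with
  | zero => simp
  | succ n ih =>
    rw [ascPochhammer_succ_right, Finset.prod_range_succ, ← ih]
    simp [Polynomial.eval_mul]

lemma asc_eval_pos {a : ℝ} (ha : 0 < a) (N : ℕ) : 0 < (ascPochhammer ℝ N).eval a := by
  rw [asc_eval_prod]
  exact Finset.prod_pos fun j _ => by positivity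

lemma one_le_gamma {t : ℝ} (ht : 2 ≤ t) : 1 ≤ Real.Gamma t := by
  have h2 : Real.Gamma 2 = 1 := by
    rw [show (2:ℝ) = 1 + 1 by norm_num, Real.Gamma_add_one one_ne_zero, Real.Gamma_one]; norm_num
  rcases eq_or_lt_of_le ht with h | h
  · rw [← h, h2]
  · rw [← h2]; exact (Real.Gamma_strictMonoOn_Ici (by norm_num) (le_of_lt h) h).le

lemma gamma_lower {t : ℝ} (ht : 0 < t) : (1:ℝ)/6 ≤ Real.Gamma t := by
  rcases le_or_gt 2 t with h | h
  · linarith [one_le_gamma h]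
  · have h1 : Real.Gamma (t + 2) = (t+1) * t * Real.Gamma t := by
      rw [show t + 2 = (t + 1) + 1 by ring, Real.Gamma_add_one (by linarith),
        Real.Gamma_add_one ht.ne']
      ring
    have h2 : 1 ≤ Real.Gamma (t + 2) := one_le_gamma (by linarith)
    have h3 : 0 < Real.Gamma t := Real.Gamma_pos_of_pos ht
    have h4 : (t+1)*t ≤ 6 := by nlinarith
    nlinarith [mul_nonneg h3.le (sub_nonneg.mpr h4)]

lemma U_bound (a : ℝ) (ha : 0 < a) (k N : ℕ) (hkN : k < N) :
    Real.Gamma (a + N) / (Nat.factorial (N-1-k)) * (N:ℝ)^(-(a+(k:ℝ))) ≤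
      (1 + a/((k:ℝ)+1)) ^ (a+(k:ℝ)) := by
  have hN : (0:ℝ) < N := by exact_mod_cast Nat.pos_of_ne_zero (by omega)
  have hkN' : (k:ℝ) + 1 ≤ N := by exact_mod_cast hkN
  have hx : (0:ℝ) < (N:ℝ) - k := by linarith
  have hs : (0:ℝ) ≤ a + k := by positivity
  -- Gamma(x) with x = N - k equals (N-1-k)!
  have hfac : Real.Gamma ((N:ℝ) - k) = (Nat.factorial (N-1-k) : ℝ) := by
    have h1 : (N:ℝ) - k = ((N - 1 - k : ℕ) : ℝ) + 1 := by
      have : N - 1 - k + 1 = N - k := by omega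
      rw [show ((N-1-k:ℕ):ℝ) + 1 = ((N-1-k+1 : ℕ):ℝ) by push_cast; ring, this]
      push_cast [Nat.cast_sub hkN.le]; ring
    rw [h1, Real.Gamma_nat_eq_factorial]
  have key : Real.Gamma (a + N) ≤ (Nat.factorial (N-1-k) : ℝ) * ((N:ℝ) + a) ^ (a + k) := by
    have h := gamma_add_le hx hs
    rw [show (N:ℝ) - k + (a + k) = a + N by ring, hfac] at h
    refine h.trans (le_of_eq ?_)
    rw [show a + (N:ℝ) = (N:ℝ) + a by ring]
  have hfacpos : (0:ℝ) < (Nat.factorial (N-1-k) : ℝ) := by positivity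
  have hNa : (0:ℝ) ≤ (N:ℝ) + a := by positivity
  have step1 : Real.Gamma (a + N) / (Nat.factorial (N-1-k)) * (N:ℝ)^(-(a+(k:ℝ))) ≤
      (((N:ℝ) + a) / N) ^ (a + (k:ℝ)) := by
    rw [Real.div_rpow hNa hN.le, Real.rpow_neg hN.le]
    rw [div_mul_eq_mul_div, div_le_div_iff₀ hfacpos (Real.rpow_pos_of_pos hN _)]
    have hNpow : (0:ℝ) < (N:ℝ) ^ (a + (k:ℝ)) := Real.rpow_pos_of_pos hN _
    calc Real.Gamma (a + N) * ((N:ℝ) ^ (a + (k:ℝ)))⁻¹ * (N:ℝ) ^ (a + (k:ℝ))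
        = Real.Gamma (a + N) := by field_simp
      _ ≤ (Nat.factorial (N-1-k) : ℝ) * ((N:ℝ) + a) ^ (a + k) := key
      _ = ((N:ℝ) + a) ^ (a + (k:ℝ)) * (Nat.factorial (N-1-k)) := by ring
  refine step1.trans ?_
  apply Real.rpow_le_rpow (by positivity) ?_ hs
  have hk1 : (0:ℝ) < (k:ℝ) + 1 := by positivity
  have h1 : ((N:ℝ) + a) / N = 1 + a / N := by field_simp
  rw [h1]
  have : a / (N:ℝ) ≤ a / ((k:ℝ)+1) := by
    apply div_le_div_of_nonneg_left ha.le hk1 hkN'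
  linarith

open Filter in
lemma U_tendsto (a : ℝ) (ha : 0 < a) (k : ℕ) :
    Tendsto (fun N : ℕ => Real.Gamma (a + N) / (Nat.factorial (N-1-k)) *
      (N:ℝ)^(-(a+(k:ℝ)))) atTop (𝓝 1) := by
  have hha'pos' : 0 < a + (k:ℝ) := by positivity
  -- Step A
  have hT1 : Tendsto (fun M : ℕ => Real.Gamma ((a + (k:ℝ)) + (M+1)) / ((M:ℝ)^(a + (k:ℝ)) * (Nat.factorial M)))
      atTop (𝓝 1) := by
    have hG := Real.GammaSeq_tendsto_Gamma (a + (k:ℝ))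
    have hΓ : Real.Gamma (a + (k:ℝ)) ≠ 0 := (Real.Gamma_pos_of_pos hha'pos').ne'
    have h2 : Tendsto (fun M : ℕ => Real.Gamma (a + (k:ℝ)) / Real.GammaSeq (a + (k:ℝ)) M) atTop (𝓝 1) := by
      have h := (tendsto_const_nhds (x := Real.Gamma (a + (k:ℝ)))).div hG hΓ
      rw [div_self hΓ] at h
      exact h
    apply h2.congr'
    filter_upwards [eventually_ge_atTop 1] with M hM
    have hMpos : (0:ℝ) < M := by exact_mod_cast hM
    have hP : (0:ℝ) < ∏ j ∈ Finset.range (M+1), ((a + (k:ℝ)) + j) :=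
      Finset.prod_pos fun j _ => by positivity
    have hgam : Real.Gamma ((a + (k:ℝ)) + (M+1)) =
        Real.Gamma (a + (k:ℝ)) * ∏ j ∈ Finset.range (M+1), ((a + (k:ℝ)) + j) := by
      have harg : (a + (k:ℝ)) + ((M:ℝ) + 1) = (a + (k:ℝ)) + ((M+1 : ℕ):ℝ) := by push_cast; ring
      rw [harg, gamma_asc (a + (k:ℝ)) hha'pos' (M+1), asc_eval_prod]
      skip
    rw [Real.GammaSeq, hgam]
    have hMa : (0:ℝ) < (M:ℝ)^(a + (k:ℝ)) := Real.rpow_pos_of_pos hMpos _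
    have hMf : (0:ℝ) < (Nat.factorial M : ℝ) := by positivity
    push_cast
    field_simp
  -- Step B : composed
  have hT2 : Tendsto (fun N : ℕ => Real.Gamma ((a + (k:ℝ)) + ((N - (k+1) : ℕ) + 1)) /
      (((N - (k+1) : ℕ):ℝ)^(a + (k:ℝ)) * (Nat.factorial (N - (k+1))))) atTop (𝓝 1) :=
    hT1.comp (tendsto_sub_atTop_nat (k+1))
  -- Step C
  have hT3 : Tendsto (fun N : ℕ => ((N - (k+1) : ℕ):ℝ) / (N:ℝ)) atTop (𝓝 1) := by
    have h0 : Tendsto (fun N : ℕ => 1 - ((k:ℝ)+1) / N) atTop (𝓝 1) := by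
      have := tendsto_const_div_atTop_nhds_zero_nat ((k:ℝ)+1)
      have h := (tendsto_const_nhds (x := (1:ℝ))).sub this
      simpa using h
    apply h0.congr'
    filter_upwards [eventually_ge_atTop (k+1)] with N hN
    have hNpos : (0:ℝ) < N := by exact_mod_cast Nat.pos_of_ne_zero (by omega)
    rw [Nat.cast_sub hN]
    field_simp
    simp
  have hT4 : Tendsto (fun N : ℕ => (((N - (k+1) : ℕ):ℝ) / (N:ℝ)) ^ (a + (k:ℝ))) atTop (𝓝 1) := by
    have := hT3.rpow_const (p := (a + (k:ℝ))) (Or.inr hha'pos'.le)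
    simpa using this
  have := hT2.mul hT4
  rw [mul_one] at this
  apply this.congr'
  filter_upwards [eventually_ge_atTop (k+2)] with N hN
  have hNk : k + 1 ≤ N := by omega
  have hM1 : 1 ≤ N - (k+1) := by omega
  have hMpos : (0:ℝ) < ((N - (k+1):ℕ):ℝ) := by exact_mod_cast hM1
  have hNpos : (0:ℝ) < (N:ℝ) := by exact_mod_cast Nat.pos_of_ne_zero (by omega)
  have harg : (a + (k:ℝ)) + (((N - (k+1) : ℕ):ℝ) + 1) = a + N := by
    rw [Nat.cast_sub hNk]; push_cast; ring
  have hfaceq : N - 1 - k = N - (k+1) := by omega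
  have hMa : (0:ℝ) < ((N - (k+1):ℕ):ℝ)^(a + (k:ℝ)) := Real.rpow_pos_of_pos hMpos _
  have hNa : (0:ℝ) < (N:ℝ)^(a + (k:ℝ)) := Real.rpow_pos_of_pos hNpos _
  have hfacpos : (0:ℝ) < (Nat.factorial (N - (k+1)) : ℝ) := by positivity
  rw [harg, Real.div_rpow hMpos.le hNpos.le, hfaceq, Real.rpow_neg hNpos.le]
  set m := ((N - (k+1):ℕ):ℝ) ^ (a + (k:ℝ)) with hm
  field_simp

noncomputable def gterm (θ α x y : ℝ) (k l : ℕ) : ℝ :=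
  ((-1) ^ k * x ^ k / ((Nat.factorial k : ℝ) * Real.Gamma ((α + 1 + k) / θ))) *
    ((-1) ^ l * y ^ (θ * (l : ℝ)) /
      ((Nat.factorial l : ℝ) * Real.Gamma (α + 1 + θ * l))) *
    (θ / (α + 1 + k + θ * l))

noncomputable def Ufun (θ α : ℝ) (k N : ℕ) : ℝ :=
  Real.Gamma ((α + 1 + k) / θ + N) / (Nat.factorial (N - 1 - k)) *
    (N : ℝ) ^ (-((α + 1 + k) / θ + (k : ℝ)))

noncomputable def Vfun (θ α : ℝ) (l N : ℕ) : ℝ :=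
  Real.Gamma ((α + 1 + θ * l) + N) / (Nat.factorial (N - 1 - l)) *
    (N : ℝ) ^ (-((α + 1 + θ * l) + (l : ℝ)))

noncomputable def fterm (θ α x y : ℝ) (N : ℕ) (p : ℕ × ℕ) : ℝ :=
  if p.1 < N ∧ p.2 < N then
    Ufun θ α p.1 N * Vfun θ α p.2 N * gterm θ α x y p.1 p.2 else 0

section Key

variable {θ α x y : ℝ} (hθ : 0 < θ) (hα : -1 < α) (hx : 0 < x) (hy : 0 < y)

include hθ hα hx hy in
lemma key_eq {N k l : ℕ} (hk : k < N) (hl : l < N) :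
    (N:ℝ) ^ (-(1+1/θ)*(1+α)) * θ *
      (((ascPochhammer ℝ N).eval (((k : ℝ) + 1 + α) / θ) *
          (x * (N:ℝ) ^ (-(1+1/θ))) ^ k /
          ((Nat.factorial k : ℝ) * (Nat.factorial (N - 1 - k) : ℝ))) *
        ((ascPochhammer ℝ N).eval (θ * (l : ℝ) + α + 1) *
          (y * (N:ℝ) ^ (-(1+1/θ))) ^ (θ * (l : ℝ)) /
          ((Nat.factorial l : ℝ) * (Nat.factorial (N - 1 - l) : ℝ))) *
        ((-1) ^ (k + l) / ((k : ℝ) + 1 + θ * (l : ℝ) + α))) =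
      Ufun θ α k N * Vfun θ α l N * gterm θ α x y k l := by
  have hNpos : (0:ℝ) < N := by exact_mod_cast Nat.pos_of_ne_zero (by omega)
  have ha : (0:ℝ) < (α + 1 + (k:ℝ)) / θ := by
    apply div_pos ?_ hθ
    have : (0:ℝ) ≤ (k:ℝ) := Nat.cast_nonneg k
    linarith
  have hb : (0:ℝ) < α + 1 + θ * (l:ℝ) := by
    have : (0:ℝ) ≤ θ * l := by positivity
    linarith
  have e1 : ((k:ℝ) + 1 + α) / θ = (α + 1 + (k:ℝ)) / θ := by ring
  have e2 : θ * (l:ℝ) + α + 1 = α + 1 + θ * (l:ℝ) := by ring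
  have hevA : (ascPochhammer ℝ N).eval ((α + 1 + (k:ℝ)) / θ) =
      Real.Gamma ((α + 1 + (k:ℝ)) / θ + N) / Real.Gamma ((α + 1 + (k:ℝ)) / θ) := by
    rw [gamma_asc _ ha N]
    field_simp [(Real.Gamma_pos_of_pos ha).ne']
  have hevB : (ascPochhammer ℝ N).eval (α + 1 + θ * (l:ℝ)) =
      Real.Gamma ((α + 1 + θ * (l:ℝ)) + N) / Real.Gamma (α + 1 + θ * (l:ℝ)) := by
    rw [gamma_asc _ hb N]
    field_simp [(Real.Gamma_pos_of_pos hb).ne']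
  have hs : (0:ℝ) < (N:ℝ) ^ (-(1+1/θ)) := Real.rpow_pos_of_pos hNpos _
  have hxs : (x * (N:ℝ) ^ (-(1+1/θ))) ^ k = x ^ k * ((N:ℝ) ^ (-(1+1/θ))) ^ k := mul_pow _ _ _
  have hys : (y * (N:ℝ) ^ (-(1+1/θ))) ^ (θ * (l:ℝ)) =
      y ^ (θ * (l:ℝ)) * ((N:ℝ) ^ (-(1+1/θ))) ^ (θ * (l:ℝ)) := Real.mul_rpow hy.le hs.le
  have hsk : ((N:ℝ) ^ (-(1+1/θ))) ^ k = (N:ℝ) ^ (-(1+1/θ) * (k:ℝ)) := by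
    rw [← Real.rpow_natCast ((N:ℝ) ^ (-(1+1/θ))) k, ← Real.rpow_mul hNpos.le]
  have hsl : ((N:ℝ) ^ (-(1+1/θ))) ^ (θ * (l:ℝ)) = (N:ℝ) ^ (-(1+1/θ) * (θ * (l:ℝ))) := by
    rw [← Real.rpow_mul hNpos.le]
  -- power splitting identities
  have hNA : (N:ℝ) ^ (-(1+1/θ)*(1+α)) = (N:ℝ) ^ (-((1+α)/θ)) * (N:ℝ) ^ (-(1+α)) := by
    rw [← Real.rpow_add hNpos]; congr 1; field_simp; ring
  have hDA : (N:ℝ) ^ (-((α + 1 + (k:ℝ)) / θ + (k:ℝ))) =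
      (N:ℝ) ^ (-(1+1/θ) * (k:ℝ)) * (N:ℝ) ^ (-((1+α)/θ)) := by
    rw [← Real.rpow_add hNpos]; congr 1; field_simp; ring
  have hDB : (N:ℝ) ^ (-((α + 1 + θ * (l:ℝ)) + (l:ℝ))) =
      (N:ℝ) ^ (-(1+1/θ) * (θ * (l:ℝ))) * (N:ℝ) ^ (-(1+α)) := by
    rw [← Real.rpow_add hNpos]; congr 1; field_simp; ring
  rw [e1, e2, hxs, hys, hsk, hsl, hNA, hevA, hevB]
  rw [Ufun, Vfun, gterm, hDA, hDB]
  have hΓa : Real.Gamma ((α + 1 + (k:ℝ)) / θ) ≠ 0 := (Real.Gamma_pos_of_pos ha).ne'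
  have hΓb : Real.Gamma (α + 1 + θ * (l:ℝ)) ≠ 0 := (Real.Gamma_pos_of_pos hb).ne'
  have hden : (k:ℝ) + 1 + θ * (l:ℝ) + α ≠ 0 := by
    have : (0:ℝ) ≤ θ * l := by positivity
    have : (0:ℝ) ≤ (k:ℝ) := by positivity
    intro h; nlinarith
  have hden2 : α + 1 + (k:ℝ) + θ * (l:ℝ) ≠ 0 := by
    intro h; apply hden; linarith
  have hfk : (Nat.factorial k : ℝ) ≠ 0 := by positivity
  have hfl : (Nat.factorial l : ℝ) ≠ 0 := by positivity
  have hfk' : (Nat.factorial (N - 1 - k) : ℝ) ≠ 0 := by positivity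
  have hfl' : (Nat.factorial (N - 1 - l) : ℝ) ≠ 0 := by positivity
  rw [pow_add]
  field_simp
  ring

include hθ hα hx hy in
lemma sum_eq (N : ℕ) :
    (N:ℝ) ^ (-(1+1/θ)*(1+α)) *
      KJac α θ N (x * (N:ℝ) ^ (-(1+1/θ))) (y * (N:ℝ) ^ (-(1+1/θ))) =
      ∑' p : ℕ × ℕ, fterm θ α x y N p := by
  have hsupp : ∀ p ∉ Finset.range N ×ˢ Finset.range N, fterm θ α x y N p = 0 := by
    intro p hp
    rw [fterm, if_neg]
    simp only [Finset.mem_product, Finset.mem_range] at hp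
    tauto
  rw [tsum_eq_sum hsupp, Finset.sum_product, KJac]
  simp only [Finset.mul_sum]
  refine Finset.sum_congr rfl fun k hk => ?_
  refine Finset.sum_congr rfl fun l hl => ?_
  simp only [Finset.mem_range] at hk hl
  rw [fterm, if_pos ⟨hk, hl⟩, ← key_eq hθ hα hx hy hk hl]
  ring

include hθ hα in
lemma Ufun_pos {k N : ℕ} (hk : k < N) : 0 < Ufun θ α k N := by
  have hNpos : (0:ℝ) < N := by exact_mod_cast Nat.pos_of_ne_zero (by omega)
  have ha : (0:ℝ) < (α + 1 + (k:ℝ)) / θ + N := by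
    have h1 : (0:ℝ) < (α + 1 + (k:ℝ)) / θ := by
      apply div_pos ?_ hθ
      have : (0:ℝ) ≤ (k:ℝ) := Nat.cast_nonneg k
      linarith
    linarith
  have := Real.Gamma_pos_of_pos ha
  have hf : (0:ℝ) < (Nat.factorial (N - 1 - k) : ℝ) := by positivity
  have := Real.rpow_pos_of_pos hNpos (-((α + 1 + (k:ℝ)) / θ + (k:ℝ)))
  rw [Ufun]; positivity

include hθ hα in
lemma Vfun_pos {l N : ℕ} (hl : l < N) : 0 < Vfun θ α l N := by
  have hNpos : (0:ℝ) < N := by exact_mod_cast Nat.pos_of_ne_zero (by omega)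
  have hb : (0:ℝ) < (α + 1 + θ * (l:ℝ)) + N := by
    have : (0:ℝ) ≤ θ * l := by positivity
    linarith
  have := Real.Gamma_pos_of_pos hb
  have hf : (0:ℝ) < (Nat.factorial (N - 1 - l) : ℝ) := by positivity
  have := Real.rpow_pos_of_pos hNpos (-((α + 1 + θ * (l:ℝ)) + (l:ℝ)))
  rw [Vfun]; positivity

include hθ hα in
lemma Ufun_tendsto (k : ℕ) :
    Filter.Tendsto (fun N : ℕ => Ufun θ α k N) Filter.atTop (nhds 1) := by
  have ha : (0:ℝ) < (α + 1 + (k:ℝ)) / θ := by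
    apply div_pos ?_ hθ
    have : (0:ℝ) ≤ (k:ℝ) := Nat.cast_nonneg k
    linarith
  exact U_tendsto _ ha k

include hθ hα in
lemma Vfun_tendsto (l : ℕ) :
    Filter.Tendsto (fun N : ℕ => Vfun θ α l N) Filter.atTop (nhds 1) := by
  have hb : (0:ℝ) < α + 1 + θ * (l:ℝ) := by
    have : (0:ℝ) ≤ θ * l := by positivity
    linarith
  exact U_tendsto _ hb l

include hθ hα in
lemma fterm_tendsto (x y : ℝ) (p : ℕ × ℕ) :
    Filter.Tendsto (fun N : ℕ => fterm θ α x y N p) Filter.atTop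
      (nhds (gterm θ α x y p.1 p.2)) := by
  have h := ((Ufun_tendsto hθ hα p.1).mul (Vfun_tendsto hθ hα p.2)).mul
    (tendsto_const_nhds (x := gterm θ α x y p.1 p.2))
  rw [one_mul, one_mul] at h
  apply h.congr'
  filter_upwards [Filter.eventually_ge_atTop (max p.1 p.2 + 1)] with N hN
  have h1 : p.1 < N := lt_of_lt_of_le (Nat.lt_succ_of_le (le_max_left _ _)) hN
  have h2 : p.2 < N := lt_of_lt_of_le (Nat.lt_succ_of_le (le_max_right _ _)) hN
  rw [fterm, if_pos ⟨h1, h2⟩]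

include hθ hα in
lemma Ufun_bound2 {k N : ℕ} (hk : k < N) :
    Ufun θ α k N ≤ ((1 + (|α|+2)/θ) ^ ((|α|+2)/θ + 1)) ^ (k+1) := by
  have ha : (0:ℝ) < (α + 1 + (k:ℝ)) / θ := by
    apply div_pos ?_ hθ
    have : (0:ℝ) ≤ (k:ℝ) := Nat.cast_nonneg k
    linarith
  have hk0 : (0:ℝ) ≤ (k:ℝ) := Nat.cast_nonneg k
  have habs : α ≤ |α| := le_abs_self α
  have habs0 : 0 ≤ |α| := abs_nonneg α
  set a : ℝ := (α + 1 + (k:ℝ)) / θ with haa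
  have h0 := U_bound a ha k N hk
  have hin : α+1+(k:ℝ) ≤ (|α|+2)*((k:ℝ)+1) := by nlinarith [mul_nonneg habs0 hk0]
  have h1 : a / ((k:ℝ)+1) ≤ (|α|+2)/θ := by
    rw [haa, div_div, div_le_div_iff₀ (by positivity) hθ]
    nlinarith [mul_le_mul_of_nonneg_right hin hθ.le]
  have hB1 : (1:ℝ) ≤ 1 + (|α|+2)/θ := by
    have : (0:ℝ) ≤ (|α|+2)/θ := by positivity
    linarith
  have h2 : (1 + a/((k:ℝ)+1)) ^ (a + (k:ℝ)) ≤ (1 + (|α|+2)/θ) ^ (a + (k:ℝ)) :=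
    Real.rpow_le_rpow (by positivity) (by linarith) (by positivity)
  have h3 : a + (k:ℝ) ≤ ((|α|+2)/θ + 1) * ((k:ℝ)+1) := by
    have := (div_le_iff₀ (by positivity : (0:ℝ) < (k:ℝ)+1)).mp h1
    ring_nf
    ring_nf at this
    nlinarith
  have h4 : (1 + (|α|+2)/θ) ^ (a + (k:ℝ)) ≤
      (1 + (|α|+2)/θ) ^ (((|α|+2)/θ + 1) * ((k:ℝ)+1)) :=
    Real.rpow_le_rpow_of_exponent_le hB1 h3
  have h5 : (1 + (|α|+2)/θ) ^ (((|α|+2)/θ + 1) * ((k:ℝ)+1)) =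
      ((1 + (|α|+2)/θ) ^ ((|α|+2)/θ + 1)) ^ (k+1) := by
    rw [Real.rpow_mul (by positivity), show ((k:ℝ)+1) = ((k+1:ℕ):ℝ) by push_cast; ring,
      Real.rpow_natCast]
  calc Ufun θ α k N ≤ (1 + a/((k:ℝ)+1)) ^ (a + (k:ℝ)) := h0
    _ ≤ (1 + (|α|+2)/θ) ^ (a + (k:ℝ)) := h2
    _ ≤ _ := by rw [← h5] at *; exact h4

include hθ hα in
lemma Vfun_bound2 {l N : ℕ} (hl : l < N) :
    Vfun θ α l N ≤ ((1 + (|α|+1+θ)) ^ (|α|+2+θ)) ^ (l+1) := by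
  have hl0 : (0:ℝ) ≤ (l:ℝ) := Nat.cast_nonneg l
  have habs : α ≤ |α| := le_abs_self α
  have habs0 : 0 ≤ |α| := abs_nonneg α
  have hθl : (0:ℝ) ≤ θ * l := by positivity
  have hb : (0:ℝ) < α + 1 + θ * (l:ℝ) := by linarith
  set b : ℝ := α + 1 + θ * (l:ℝ) with hbb
  have h0 := U_bound b hb l N hl
  have h1 : b / ((l:ℝ)+1) ≤ |α|+1+θ := by
    rw [hbb, div_le_iff₀ (by positivity : (0:ℝ) < (l:ℝ)+1)]
    nlinarith
  have hB1 : (1:ℝ) ≤ 1 + (|α|+1+θ) := by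
    have : (0:ℝ) ≤ |α|+1+θ := by positivity
    linarith
  have h2 : (1 + b/((l:ℝ)+1)) ^ (b + (l:ℝ)) ≤ (1 + (|α|+1+θ)) ^ (b + (l:ℝ)) :=
    Real.rpow_le_rpow (by positivity) (by linarith) (by positivity)
  have h3 : b + (l:ℝ) ≤ (|α|+2+θ) * ((l:ℝ)+1) := by
    rw [hbb]; nlinarith
  have h4 : (1 + (|α|+1+θ)) ^ (b + (l:ℝ)) ≤ (1 + (|α|+1+θ)) ^ ((|α|+2+θ) * ((l:ℝ)+1)) :=
    Real.rpow_le_rpow_of_exponent_le hB1 h3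
  have h5 : (1 + (|α|+1+θ)) ^ ((|α|+2+θ) * ((l:ℝ)+1)) =
      ((1 + (|α|+1+θ)) ^ (|α|+2+θ)) ^ (l+1) := by
    rw [Real.rpow_mul (by positivity), show ((l:ℝ)+1) = ((l+1:ℕ):ℝ) by push_cast; ring,
      Real.rpow_natCast]
  calc Vfun θ α l N ≤ (1 + b/((l:ℝ)+1)) ^ (b + (l:ℝ)) := h0
    _ ≤ (1 + (|α|+1+θ)) ^ (b + (l:ℝ)) := h2
    _ ≤ _ := by rw [← h5] at *; exact h4

include hθ hα hx hy in
lemma gterm_bound (k l : ℕ) :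
    |gterm θ α x y k l| ≤
      36 * (x^k / (Nat.factorial k)) * ((y^θ)^l / (Nat.factorial l)) * (θ/(α+1)) := by
  have hk0 : (0:ℝ) ≤ (k:ℝ) := Nat.cast_nonneg k
  have hθl : (0:ℝ) ≤ θ * l := by positivity
  have ha : (0:ℝ) < (α + 1 + (k:ℝ)) / θ := by
    apply div_pos ?_ hθ; linarith
  have hb : (0:ℝ) < α + 1 + θ * (l:ℝ) := by linarith
  have hΓa := Real.Gamma_pos_of_pos ha
  have hΓb := Real.Gamma_pos_of_pos hb
  have hΓa6 := gamma_lower ha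
  have hΓb6 := gamma_lower hb
  have hfk : (0:ℝ) < (Nat.factorial k : ℝ) := by positivity
  have hfl : (0:ℝ) < (Nat.factorial l : ℝ) := by positivity
  have hyp : (0:ℝ) < y ^ (θ * (l:ℝ)) := Real.rpow_pos_of_pos hy _
  have hden : (0:ℝ) < α + 1 + (k:ℝ) + θ * l := by linarith
  have hyl : y ^ (θ * (l:ℝ)) = (y^θ)^l := by
    rw [Real.rpow_mul hy.le, Real.rpow_natCast]
  rw [gterm, abs_mul, abs_mul, abs_div, abs_div, abs_div]
  have e1 : |(-1:ℝ)^k * x^k| = x^k := by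
    rw [abs_mul, abs_pow, abs_neg, abs_one, one_pow, one_mul, abs_of_pos (by positivity)]
  have e2 : |(-1:ℝ)^l * y ^ (θ * (l:ℝ))| = y ^ (θ * (l:ℝ)) := by
    rw [abs_mul, abs_pow, abs_neg, abs_one, one_pow, one_mul, abs_of_pos hyp]
  have e3 : |(Nat.factorial k : ℝ) * Real.Gamma ((α + 1 + k)/θ)| =
      (Nat.factorial k : ℝ) * Real.Gamma ((α + 1 + k)/θ) := abs_of_pos (by positivity)
  have e4 : |(Nat.factorial l : ℝ) * Real.Gamma (α + 1 + θ * l)| =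
      (Nat.factorial l : ℝ) * Real.Gamma (α + 1 + θ * l) := abs_of_pos (by positivity)
  have e5 : |θ| = θ := abs_of_pos hθ
  have e6 : |α + 1 + (k:ℝ) + θ * l| = α + 1 + (k:ℝ) + θ * l := abs_of_pos hden
  rw [e1, e2, e3, e4, e5, e6]
  have b1 : x^k / ((Nat.factorial k : ℝ) * Real.Gamma ((α + 1 + k)/θ)) ≤
      6 * (x^k / (Nat.factorial k)) := by
    rw [div_le_iff₀ (by positivity)]
    have : x^k ≤ 6 * (x^k / (Nat.factorial k)) * ((Nat.factorial k : ℝ) * (1/6)) := by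
      field_simp
      norm_num
    calc x^k ≤ 6 * (x^k / (Nat.factorial k)) * ((Nat.factorial k : ℝ) * (1/6)) := this
      _ ≤ 6 * (x^k / (Nat.factorial k)) * ((Nat.factorial k : ℝ) * Real.Gamma ((α + 1 + k)/θ)) := by
          apply mul_le_mul_of_nonneg_left ?_ (by positivity)
          exact mul_le_mul_of_nonneg_left hΓa6 hfk.le
  have b2 : y ^ (θ * (l:ℝ)) / ((Nat.factorial l : ℝ) * Real.Gamma (α + 1 + θ * l)) ≤
      6 * ((y^θ)^l / (Nat.factorial l)) := by
    rw [div_le_iff₀ (by positivity), hyl]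
    have : (y^θ)^l ≤ 6 * ((y^θ)^l / (Nat.factorial l)) * ((Nat.factorial l : ℝ) * (1/6)) := by
      field_simp
      norm_num
    calc (y^θ)^l ≤ 6 * ((y^θ)^l / (Nat.factorial l)) * ((Nat.factorial l : ℝ) * (1/6)) := this
      _ ≤ 6 * ((y^θ)^l / (Nat.factorial l)) * ((Nat.factorial l : ℝ) * Real.Gamma (α + 1 + θ * l)) := by
          apply mul_le_mul_of_nonneg_left ?_ (by positivity)
          exact mul_le_mul_of_nonneg_left hΓb6 hfl.le
  have b3 : θ / (α + 1 + (k:ℝ) + θ * l) ≤ θ / (α + 1) :=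
    div_le_div_of_nonneg_left hθ.le (by linarith) (by linarith)
  calc x^k / ((Nat.factorial k : ℝ) * Real.Gamma ((α + 1 + k)/θ)) *
        (y ^ (θ * (l:ℝ)) / ((Nat.factorial l : ℝ) * Real.Gamma (α + 1 + θ * l))) *
        (θ / (α + 1 + (k:ℝ) + θ * l))
      ≤ (6 * (x^k / (Nat.factorial k))) * (6 * ((y^θ)^l / (Nat.factorial l))) * (θ/(α+1)) := by
        apply mul_le_mul (mul_le_mul b1 b2 (by positivity) (by positivity))
          b3 (div_nonneg hθ.le hden.le) (by positivity)
    _ = 36 * (x^k / (Nat.factorial k)) * ((y^θ)^l / (Nat.factorial l)) * (θ/(α+1)) := by ring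

noncomputable def Ebnd (θ α x : ℝ) (k : ℕ) : ℝ :=
  (6 * ((1 + (|α|+2)/θ) ^ ((|α|+2)/θ + 1))) *
    ((((1 + (|α|+2)/θ) ^ ((|α|+2)/θ + 1)) * x)^k / (Nat.factorial k))

noncomputable def Fbnd (θ α y : ℝ) (l : ℕ) : ℝ :=
  (6 * (θ/(α+1)) * ((1 + (|α|+1+θ)) ^ (|α|+2+θ))) *
    ((((1 + (|α|+1+θ)) ^ (|α|+2+θ)) * y^θ)^l / (Nat.factorial l))

include hθ in
lemma Rk_one : (1:ℝ) ≤ (1 + (|α|+2)/θ) ^ ((|α|+2)/θ + 1) :=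
  Real.one_le_rpow (le_add_of_nonneg_right (by positivity)) (by positivity)

lemma Rl_one (hθ : 0 < θ) : (1:ℝ) ≤ (1 + (|α|+1+θ)) ^ (|α|+2+θ) :=
  Real.one_le_rpow (le_add_of_nonneg_right (by positivity)) (by positivity)

include hθ hα hx hy in
lemma gterm_le (k l : ℕ) :
    ‖gterm θ α x y k l‖ ≤ Ebnd θ α x k * Fbnd θ α y l := by
  have hα1 : (0:ℝ) < α + 1 := by linarith
  have hRk := Rk_one (α := α) hθ
  have hRl := Rl_one (α := α) hθ
  have hRk' : (1:ℝ) ≤ ((1 + (|α|+2)/θ) ^ ((|α|+2)/θ + 1))^(k+1) := one_le_pow₀ hRk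
  have hRl' : (1:ℝ) ≤ ((1 + (|α|+1+θ)) ^ (|α|+2+θ))^(l+1) := one_le_pow₀ hRl
  have h0 := gterm_bound hθ hα hx hy k l
  rw [Real.norm_eq_abs]
  calc |gterm θ α x y k l| ≤
      36 * (x^k / (Nat.factorial k)) * ((y^θ)^l / (Nat.factorial l)) * (θ/(α+1)) := h0
    _ ≤ ((1 + (|α|+2)/θ) ^ ((|α|+2)/θ + 1))^(k+1) *
        ((1 + (|α|+1+θ)) ^ (|α|+2+θ))^(l+1) *
        (36 * (x^k / (Nat.factorial k)) * ((y^θ)^l / (Nat.factorial l)) * (θ/(α+1))) := by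
        nth_rewrite 1 [← one_mul (36 * (x^k / (Nat.factorial k)) *
          ((y^θ)^l / (Nat.factorial l)) * (θ/(α+1)))]
        apply mul_le_mul ?_ le_rfl (by positivity) (by positivity)
        calc (1:ℝ) = 1 * 1 := by ring
          _ ≤ _ := mul_le_mul hRk' hRl' zero_le_one (by positivity)
    _ = Ebnd θ α x k * Fbnd θ α y l := by
        rw [Ebnd, Fbnd, mul_pow, mul_pow, pow_succ, pow_succ]
        ring

include hθ hα hx hy in
lemma fterm_le (N : ℕ) (p : ℕ × ℕ) :
    ‖fterm θ α x y N p‖ ≤ Ebnd θ α x p.1 * Fbnd θ α y p.2 := by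
  obtain ⟨k, l⟩ := p
  by_cases h : k < N ∧ l < N
  · rw [fterm, if_pos h]
    have hU := Ufun_pos hθ hα h.1
    have hV := Vfun_pos hθ hα h.2
    have hUb := Ufun_bound2 hθ hα h.1
    have hVb := Vfun_bound2 hθ hα h.2
    have hg := gterm_bound hθ hα hx hy k l
    have hα1 : (0:ℝ) < α + 1 := by linarith
    rw [Real.norm_eq_abs, abs_mul, abs_mul, abs_of_pos hU, abs_of_pos hV]
    calc Ufun θ α k N * Vfun θ α l N * |gterm θ α x y k l| ≤
        ((1 + (|α|+2)/θ) ^ ((|α|+2)/θ + 1))^(k+1) *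
          ((1 + (|α|+1+θ)) ^ (|α|+2+θ))^(l+1) *
          (36 * (x^k / (Nat.factorial k)) * ((y^θ)^l / (Nat.factorial l)) * (θ/(α+1))) := by
          apply mul_le_mul (mul_le_mul hUb hVb hV.le (by positivity)) hg (abs_nonneg _)
            (by positivity)
      _ = Ebnd θ α x k * Fbnd θ α y l := by
          rw [Ebnd, Fbnd, mul_pow, mul_pow, pow_succ, pow_succ]
          ring
  · rw [fterm, if_neg h, norm_zero]
    have hα1 : (0:ℝ) < α + 1 := by linarith
    rw [Ebnd, Fbnd]
    positivity

include hθ hα hx hy in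
lemma bnd_summable : Summable (fun p : ℕ × ℕ => Ebnd θ α x p.1 * Fbnd θ α y p.2) := by
  have hα1 : (0:ℝ) < α + 1 := by linarith
  have hE : Summable (Ebnd θ α x) :=
    (Real.summable_pow_div_factorial _).mul_left _
  have hF : Summable (Fbnd θ α y) :=
    (Real.summable_pow_div_factorial _).mul_left _
  exact hE.mul_of_nonneg hF (fun k => by rw [Ebnd]; positivity)
    (fun l => by rw [Fbnd]; positivity)

include hθ hα hx hy in
lemma kernel_tendsto :
    Filter.Tendsto (fun N : ℕ => (N:ℝ) ^ (-(1+1/θ)*(1+α)) *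
        KJac α θ N (x * (N:ℝ) ^ (-(1+1/θ))) (y * (N:ℝ) ^ (-(1+1/θ)))) Filter.atTop
      (nhds (limitKernel α θ x y)) := by
  have hEF := bnd_summable hθ hα hx hy
  have hlim := tendsto_tsum_of_dominated_convergence hEF
    (fun p => fterm_tendsto hθ hα x y p)
    (Filter.Eventually.of_forall (fun N => fterm_le hθ hα hx hy N))
  have hgsum : Summable (fun p : ℕ × ℕ => gterm θ α x y p.1 p.2) :=
    Summable.of_norm_bounded hEF (fun p => gterm_le hθ hα hx hy p.1 p.2)
  have hK : limitKernel α θ x y = ∑' p : ℕ × ℕ, gterm θ α x y p.1 p.2 := by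
    rw [limitKernel, Summable.tsum_prod' hgsum (fun k => hgsum.prod_factor k)]
    rfl
  rw [hK]
  exact Filter.Tendsto.congr (fun N => (sum_eq hθ hα hx hy N).symm) hlim

end Key

theorem jacobi_scaling_limit (θ α : ℝ) (hθ : 0 < θ) (hα : -1 < α)
    (n : ℕ) (hn : 1 ≤ n) (x : Fin n → ℝ) (hx : ∀ i, 0 < x i) :
    Filter.Tendsto
      (fun N : ℕ =>
        (N : ℝ) ^ (-(n : ℝ) * (1 + 1 / θ)) *
          (∏ i, (x i * (N : ℝ) ^ (-(1 + 1 / θ))) ^ α) *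
          Matrix.det (Matrix.of fun i j : Fin n =>
            KJac α θ N (x i * (N : ℝ) ^ (-(1 + 1 / θ)))
              (x j * (N : ℝ) ^ (-(1 + 1 / θ)))))
      Filter.atTop
      (nhds ((∏ i, x i ^ α) *
        Matrix.det (Matrix.of fun i j : Fin n => limitKernel α θ (x i) (x j)))) := by
  have hmat : Filter.Tendsto (fun N : ℕ => (Matrix.of fun i j : Fin n =>
      (N:ℝ) ^ (-(1+1/θ)*(1+α)) *
        KJac α θ N (x i * (N:ℝ)^(-(1+1/θ))) (x j * (N:ℝ)^(-(1+1/θ)))))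
      Filter.atTop (nhds (Matrix.of fun i j : Fin n => limitKernel α θ (x i) (x j))) := by
    refine tendsto_pi_nhds.2 ?_
    intro i
    rw [tendsto_pi_nhds]
    intro j
    simpa only [Matrix.of_apply] using kernel_tendsto hθ hα (hx i) (hx j)
  have hdet : Filter.Tendsto (fun N : ℕ => Matrix.det (Matrix.of fun i j : Fin n =>
      (N:ℝ) ^ (-(1+1/θ)*(1+α)) *
        KJac α θ N (x i * (N:ℝ)^(-(1+1/θ))) (x j * (N:ℝ)^(-(1+1/θ)))))
      Filter.atTop (nhds (Matrix.det (Matrix.of fun i j : Fin n =>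
        limitKernel α θ (x i) (x j)))) :=
    ((Continuous.matrix_det continuous_id).tendsto _).comp hmat
  have hfin := hdet.const_mul (∏ i, x i ^ α)
  apply hfin.congr'
  filter_upwards [Filter.eventually_ge_atTop 1] with N hN
  have hNpos : (0:ℝ) < N := by exact_mod_cast hN
  have hsN : (0:ℝ) < (N:ℝ)^(-(1+1/θ)) := Real.rpow_pos_of_pos hNpos _
  have h1 : (Matrix.of fun i j : Fin n =>
      (N:ℝ) ^ (-(1+1/θ)*(1+α)) *
        KJac α θ N (x i * (N:ℝ)^(-(1+1/θ))) (x j * (N:ℝ)^(-(1+1/θ)))) =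
      ((N:ℝ) ^ (-(1+1/θ)*(1+α))) • (Matrix.of fun i j : Fin n =>
        KJac α θ N (x i * (N:ℝ)^(-(1+1/θ))) (x j * (N:ℝ)^(-(1+1/θ)))) := by
    ext i j
    simp [Matrix.smul_apply, smul_eq_mul]
  rw [h1, Matrix.det_smul, Fintype.card_fin]
  have h2 : (∏ i, (x i * (N:ℝ)^(-(1+1/θ))) ^ α) =
      (∏ i, x i ^ α) * (((N:ℝ)^(-(1+1/θ))) ^ α) ^ n := by
    rw [show (∏ i, (x i * (N:ℝ)^(-(1+1/θ))) ^ α) =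
        ∏ i, (x i ^ α * ((N:ℝ)^(-(1+1/θ))) ^ α) from
      Finset.prod_congr rfl fun i _ => Real.mul_rpow (hx i).le hsN.le]
    rw [Finset.prod_mul_distrib, Finset.prod_const, Finset.card_univ, Fintype.card_fin]
  have h3 : (N:ℝ)^(-(n:ℝ)*(1+1/θ)) * ((((N:ℝ)^(-(1+1/θ))) ^ α) ^ n) =
      ((N:ℝ) ^ (-(1+1/θ)*(1+α))) ^ n := by
    have e1 : (N:ℝ)^(-(n:ℝ)*(1+1/θ)) = ((N:ℝ)^(-(1+1/θ))) ^ n := by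
      rw [show (-(n:ℝ)*(1+1/θ)) = (-(1+1/θ))*(n:ℝ) by ring, Real.rpow_mul hNpos.le,
        Real.rpow_natCast]
    have e2 : (N:ℝ) ^ (-(1+1/θ)*(1+α)) = (N:ℝ)^(-(1+1/θ)) * ((N:ℝ)^(-(1+1/θ))) ^ α := by
      rw [Real.rpow_mul hNpos.le, Real.rpow_add hsN, Real.rpow_one]
    rw [e1, e2, mul_pow]
  rw [h2, ← h3]
  ring
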